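/- Let U_{1,n} ≤ … ≤ U_{n,n} be the order statistics of n i.i.d. Uniform(0,1) random variables and Ψ(x) = 2^{{log₂ x}}. For 0 ≤ r < n, P{Ψ(U_{r+1,n})/U_{r+1,n} > x} = P{U_{r+1,n} < 2^{-⌊log₂ x⌋}} ~ C(n, r+1) · 2^{(r+1){log₂ x}} / x^{r+1} as x → ∞, where C(n,r+1) is the binomial coefficient. -/

import Mathlib

open MeasureTheory ProbabilityTheory Filter Topology
open scoped ENNReal

/-- The `(r+1)`-st order statistic (the `(r+1)`-st smallest value) of the family
`U i`, defined as `inf {t : #{i : U i ω ≤ t} ≥ r+1}`. -/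
noncomputable def orderStat {Ω : Type*} {n : ℕ} (U : Fin n → Ω → ℝ) (r : ℕ) (ω : Ω) : ℝ :=
  sInf {t : ℝ | r + 1 ≤ {i : Fin n | U i ω ≤ t}.ncard}

private lemma aux_floor_lt {x : ℝ} (hx : 0 < x) (m : ℤ) :
    x < (2:ℝ) ^ m ↔ ⌊Real.logb 2 x⌋ < m := by
  rw [Int.floor_lt]
  have h := Real.logb_lt_iff_lt_rpow (b := 2) one_lt_two hx (y := (m:ℝ))
  rw [Real.rpow_intCast] at h
  exact h.symm

private lemma aux_swap {u x : ℝ} (hu : 0 < u) (hx : 0 < x) :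
    x < (2:ℝ) ^ (-⌊Real.logb 2 u⌋) ↔ u < (2:ℝ) ^ (-⌊Real.logb 2 x⌋) := by
  rw [aux_floor_lt hx, aux_floor_lt hu]; omega

private lemma aux_psi {u : ℝ} (hu : 0 < u) :
    (2:ℝ) ^ Int.fract (Real.logb 2 u) / u = (2:ℝ) ^ (-⌊Real.logb 2 u⌋) := by
  have h2 : Int.fract (Real.logb 2 u)
      = Real.logb 2 u + ((-⌊Real.logb 2 u⌋ : ℤ) : ℝ) := by
    rw [Int.fract]; push_cast; ring
  rw [h2, Real.rpow_add two_pos, Real.rpow_logb two_pos (by norm_num) hu,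
    Real.rpow_intCast]
  field_simp

private lemma aux_order {Ω : Type*} {n : ℕ} {U : Fin n → Ω → ℝ} {r : ℕ} (hr : r < n) {ω : Ω}
    (hω : ∀ i, U i ω ∈ Set.Ioo (0:ℝ) 1) :
    0 < orderStat U r ω ∧
    ∀ t : ℝ, (orderStat U r ω < t ↔ r + 1 ≤ {i : Fin n | U i ω < t}.ncard) := by
  have hn : 0 < n := Nat.pos_of_ne_zero (by omega)
  haveI : NeZero n := ⟨hn.ne'⟩
  set S : Set ℝ := {t : ℝ | r + 1 ≤ {i : Fin n | U i ω ≤ t}.ncard} with hS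
  have h1S : (1:ℝ) ∈ S := by
    have : {i : Fin n | U i ω ≤ 1} = Set.univ := by
      ext i; simp [(hω i).2.le]
    simp only [hS, Set.mem_setOf_eq, this, Set.ncard_univ, Nat.card_eq_fintype_card,
      Fintype.card_fin]
    omega
  have hVne : (Finset.univ.image fun i => U i ω).Nonempty :=
    (Finset.univ_nonempty).image _
  set m : ℝ := (Finset.univ.image fun i => U i ω).min' hVne with hm
  have hm0 : 0 < m := by
    obtain ⟨i, -, hi⟩ := Finset.mem_image.mp ((Finset.univ.image fun i => U i ω).min'_mem hVne)
    rw [hm, ← hi]; exact (hω i).1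
  have hlb : ∀ s ∈ S, m ≤ s := by
    intro s hs
    have hpos : 0 < {i : Fin n | U i ω ≤ s}.ncard := by
      simp only [hS, Set.mem_setOf_eq] at hs; omega
    obtain ⟨i, hi⟩ := (Set.ncard_pos (Set.toFinite _)).mp hpos |>.mono Set.Subset.rfl
    exact le_trans (Finset.min'_le _ _ (Finset.mem_image_of_mem _ (Finset.mem_univ i)))
      hi
  have hbdd : BddBelow S := ⟨m, hlb⟩
  have hSne : S.Nonempty := ⟨1, h1S⟩
  constructor
  · exact lt_of_lt_of_le hm0 (le_csInf hSne hlb)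
  · intro t
    constructor
    · intro h
      obtain ⟨s, hsS, hst⟩ := (csInf_lt_iff hbdd hSne).mp h
      refine le_trans hsS (Set.ncard_le_ncard ?_ (Set.toFinite _))
      intro i hi
      exact lt_of_le_of_lt hi hst
    · intro h
      set Tf : Finset (Fin n) := Finset.univ.filter (fun i => U i ω < t) with hTf
      have hT : {i : Fin n | U i ω < t} = ↑Tf := by
        ext i; simp [hTf]
      rw [hT, Set.ncard_coe_finset] at h
      have hTne : Tf.Nonempty := Finset.card_pos.mp (by omega)
      have hWne : (Tf.image fun i => U i ω).Nonempty := hTne.image _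
      set s : ℝ := (Tf.image fun i => U i ω).max' hWne with hs
      have hst : s < t := by
        obtain ⟨i, hi, hieq⟩ := Finset.mem_image.mp ((Tf.image fun i => U i ω).max'_mem hWne)
        rw [hs, ← hieq]
        exact (Finset.mem_filter.mp hi).2
      have hsS : s ∈ S := by
        simp only [hS, Set.mem_setOf_eq]
        refine le_trans h ?_
        rw [← Set.ncard_coe_finset Tf]
        refine Set.ncard_le_ncard ?_ (Set.toFinite _)
        intro i hi
        have hi' : i ∈ Tf := hi
        show U i ω ≤ s
        rw [hs]
        exact Finset.le_max' _ _ (Finset.mem_image_of_mem (fun i => U i ω) hi')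
      exact lt_of_le_of_lt (csInf_le hbdd hsS) hst

private lemma aux_good {Ω : Type*} [MeasurableSpace Ω] (μ : Measure Ω)
    (n : ℕ) (U : Fin n → Ω → ℝ) (hm : ∀ i, Measurable (U i))
    (hd : ∀ i, μ.map (U i) = volume.restrict (Set.Ioo (0:ℝ) 1)) :
    ∀ᵐ ω ∂μ, ∀ i, U i ω ∈ Set.Ioo (0:ℝ) 1 := by
  rw [ae_all_iff]
  intro i
  rw [ae_iff]
  have : {ω | ¬ U i ω ∈ Set.Ioo (0:ℝ) 1} = U i ⁻¹' (Set.Ioo (0:ℝ) 1)ᶜ := rfl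
  rw [this, ← Measure.map_apply (hm i) measurableSet_Ioo.compl, hd i,
    Measure.restrict_apply measurableSet_Ioo.compl]
  simp

private lemma aux_bounds {Ω : Type*} [MeasurableSpace Ω] (μ : Measure Ω) [IsProbabilityMeasure μ]
    {n : ℕ} {U : Fin n → Ω → ℝ} (hm : ∀ i, Measurable (U i))
    (hindep : iIndepFun U μ)
    (hd : ∀ i, μ.map (U i) = volume.restrict (Set.Ioo (0:ℝ) 1))
    {r : ℕ} {y : ℝ} (hy0 : 0 < y) (hy1 : y ≤ 1) :
    ENNReal.ofReal ((n.choose (r+1) : ℝ) * y^(r+1) * (1-y)^(n-(r+1))) ≤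
      μ {ω | r + 1 ≤ {i : Fin n | U i ω < y}.ncard} ∧
    μ {ω | r + 1 ≤ {i : Fin n | U i ω < y}.ncard} ≤
      ENNReal.ofReal ((n.choose (r+1) : ℝ) * y^(r+1)) := by
  set A : Fin n → Set Ω := fun i => U i ⁻¹' Set.Iio y with hA
  have hAmeas : ∀ i, MeasurableSet (A i) := fun i => (hm i) measurableSet_Iio
  have hAval : ∀ i, μ (A i) = ENNReal.ofReal y := by
    intro i
    rw [hA]
    rw [← Measure.map_apply (hm i) measurableSet_Iio, hd i,
      Measure.restrict_apply measurableSet_Iio]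
    have : Set.Iio y ∩ Set.Ioo (0:ℝ) 1 = Set.Ioo 0 y := by
      ext z; simp only [Set.mem_inter_iff, Set.mem_Iio, Set.mem_Ioo]
      constructor
      · rintro ⟨h1, h2, h3⟩; exact ⟨h2, h1⟩
      · rintro ⟨h1, h2⟩; exact ⟨h2, h1, lt_of_lt_of_le h2 hy1⟩
    rw [this, Real.volume_Ioo, sub_zero]
  have hAcval : ∀ i, μ (A i)ᶜ = ENNReal.ofReal (1 - y) := by
    intro i
    rw [prob_compl_eq_one_sub (hAmeas i), hAval i,
      ENNReal.ofReal_sub 1 hy0.le, ENNReal.ofReal_one]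
  have hAcomap : ∀ i, MeasurableSet[(inferInstance : MeasurableSpace ℝ).comap (U i)] (A i) :=
    fun i => ⟨Set.Iio y, measurableSet_Iio, rfl⟩
  have hAccomap : ∀ i, MeasurableSet[(inferInstance : MeasurableSpace ℝ).comap (U i)] (A i)ᶜ :=
    fun i => ⟨(Set.Iio y)ᶜ, measurableSet_Iio.compl, rfl⟩
  set P : Finset (Finset (Fin n)) := Finset.powersetCard (r+1) Finset.univ with hP
  have hPcard : P.card = n.choose (r+1) := by
    rw [hP, Finset.card_powersetCard, Finset.card_univ, Fintype.card_fin]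
  have hPmem : ∀ S ∈ P, S.card = r + 1 := by
    intro S hS
    exact (Finset.mem_powersetCard.mp hS).2
  constructor
  · -- lower bound
    set E : Finset (Fin n) → Set Ω := fun S => ⋂ i, (if i ∈ S then A i else (A i)ᶜ) with hE
    have hEmeas : ∀ S, MeasurableSet (E S) := by
      intro S
      exact MeasurableSet.iInter fun i => by
        by_cases h : i ∈ S <;> simp [h, hAmeas i, (hAmeas i).compl]
    have hEval : ∀ S ∈ P, μ (E S)
        = ENNReal.ofReal (y^(r+1) * (1-y)^(n-(r+1))) := by
      intro S hS
      have := hindep.meas_iInter (s := fun i => if i ∈ S then A i else (A i)ᶜ)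
        (fun i => by by_cases h : i ∈ S <;> simp [h, hAcomap i, hAccomap i])
      rw [hE, this]
      rw [← Finset.prod_mul_prod_compl S]
      have e1 : ∏ i ∈ S, μ (if i ∈ S then A i else (A i)ᶜ) = (ENNReal.ofReal y)^(r+1) := by
        rw [Finset.prod_congr rfl (fun i hi => by rw [if_pos hi, hAval i]),
          Finset.prod_const, hPmem S hS]
      have e2 : ∏ i ∈ Sᶜ, μ (if i ∈ S then A i else (A i)ᶜ)
          = (ENNReal.ofReal (1-y))^(n-(r+1)) := by
        rw [Finset.prod_congr rfl (fun i hi => by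
          rw [if_neg (Finset.mem_compl.mp hi), hAcval i]), Finset.prod_const,
          Finset.card_compl, Fintype.card_fin, hPmem S hS]
      rw [e1, e2, ← ENNReal.ofReal_pow hy0.le, ← ENNReal.ofReal_pow (by linarith),
        ← ENNReal.ofReal_mul (by positivity)]
    have hEdisj : (P : Set (Finset (Fin n))).PairwiseDisjoint E := by
      intro S hS T hT hST
      simp only [Function.onFun]
      rw [Set.disjoint_left]
      intro ω hωS hωT
      have hcard : S.card = T.card := by
        rw [hPmem S hS, hPmem T hT]
      have hns : ¬ S ⊆ T := fun h => hST (Finset.eq_of_subset_of_card_le h hcard.ge)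
      obtain ⟨i, hiS, hiT⟩ := Finset.not_subset.mp hns
      have h1 : ω ∈ A i := by
        have := Set.mem_iInter.mp hωS i
        rwa [if_pos hiS] at this
      have h2 : ω ∈ (A i)ᶜ := by
        have := Set.mem_iInter.mp hωT i
        rwa [if_neg hiT] at this
      exact h2 h1
    have hEsub : ∀ S ∈ P, E S ⊆ {ω | r + 1 ≤ {i : Fin n | U i ω < y}.ncard} := by
      intro S hS ω hω
      simp only [Set.mem_setOf_eq]
      rw [← hPmem S hS, ← Set.ncard_coe_finset S]
      refine Set.ncard_le_ncard ?_ (Set.toFinite _)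
      intro i hi
      have hi' : i ∈ S := hi
      have := Set.mem_iInter.mp hω i
      rw [if_pos hi'] at this
      exact this
    calc ENNReal.ofReal ((n.choose (r+1) : ℝ) * y^(r+1) * (1-y)^(n-(r+1)))
        = ∑ S ∈ P, μ (E S) := by
          rw [Finset.sum_congr rfl hEval, Finset.sum_const, hPcard, nsmul_eq_mul,
            mul_assoc, ← ENNReal.ofReal_natCast (n.choose (r+1)),
            ← ENNReal.ofReal_mul (by positivity)]
      _ = μ (⋃ S ∈ P, E S) := (measure_biUnion_finset hEdisj (fun S _ => hEmeas S)).symm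
      _ ≤ _ := measure_mono (Set.iUnion₂_subset hEsub)
  · -- upper bound
    have hsub : {ω | r + 1 ≤ {i : Fin n | U i ω < y}.ncard}
        ⊆ ⋃ S ∈ P, ⋂ i ∈ S, A i := by
      intro ω hω
      simp only [Set.mem_setOf_eq] at hω
      set Tf : Finset (Fin n) := Finset.univ.filter (fun i => U i ω < y) with hTf
      have hT : {i : Fin n | U i ω < y} = ↑Tf := by ext i; simp [hTf]
      rw [hT, Set.ncard_coe_finset] at hω
      obtain ⟨S, hSsub, hScard⟩ := Finset.exists_subset_card_eq hω
      refine Set.mem_biUnion (show S ∈ P from Finset.mem_powersetCard.mpr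
        ⟨Finset.subset_univ S, hScard⟩) ?_
      refine Set.mem_biInter fun i hi => ?_
      have : i ∈ Tf := hSsub hi
      simpa [hTf, hA] using (Finset.mem_filter.mp this).2
    calc μ {ω | r + 1 ≤ {i : Fin n | U i ω < y}.ncard}
        ≤ ∑ S ∈ P, μ (⋂ i ∈ S, A i) :=
          le_trans (measure_mono hsub) (measure_biUnion_finset_le P _)
      _ = ∑ S ∈ P, (ENNReal.ofReal y)^(r+1) := by
          refine Finset.sum_congr rfl fun S hS => ?_
          rw [hindep.meas_biInter (fun i _ => hAcomap i),
            Finset.prod_congr rfl (fun i _ => hAval i), Finset.prod_const, hPmem S hS]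
      _ = ENNReal.ofReal ((n.choose (r+1) : ℝ) * y^(r+1)) := by
          rw [Finset.sum_const, hPcard, nsmul_eq_mul, ← ENNReal.ofReal_pow hy0.le,
            ← ENNReal.ofReal_natCast (n.choose (r+1)),
            ← ENNReal.ofReal_mul (by positivity)]

private lemma aux_denom {x : ℝ} (hx : 0 < x) (r : ℕ) (C : ℝ) :
    C * (2:ℝ) ^ (((r:ℝ)+1) * Int.fract (Real.logb 2 x)) / x ^ (r+1)
      = C * ((2:ℝ) ^ (-⌊Real.logb 2 x⌋)) ^ (r+1) := by
  have h1 : (2:ℝ) ^ (((r:ℝ)+1) * Int.fract (Real.logb 2 x))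
      = ((2:ℝ) ^ Int.fract (Real.logb 2 x)) ^ (r+1) := by
    rw [mul_comm, Real.rpow_mul (by norm_num : (0:ℝ) ≤ 2), ← Real.rpow_natCast _ (r+1)]
    push_cast
    ring_nf
  rw [h1, mul_div_assoc, ← div_pow, aux_psi hx]

private lemma aux_y_le {x : ℝ} (hx : 1 ≤ x) : (2:ℝ) ^ (-⌊Real.logb 2 x⌋) ≤ 2 / x := by
  have hx0 : (0:ℝ) < x := by linarith
  have h1 : (2:ℝ) ^ (-⌊Real.logb 2 x⌋) = (2:ℝ) ^ ((-⌊Real.logb 2 x⌋ : ℤ) : ℝ) :=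
    (Real.rpow_intCast 2 _).symm
  have h2 : ((-⌊Real.logb 2 x⌋ : ℤ) : ℝ) ≤ 1 - Real.logb 2 x := by
    have := Int.sub_one_lt_floor (Real.logb 2 x)
    push_cast
    linarith
  rw [h1]
  calc (2:ℝ) ^ ((-⌊Real.logb 2 x⌋ : ℤ) : ℝ)
      ≤ (2:ℝ) ^ (1 - Real.logb 2 x) :=
        (Real.rpow_le_rpow_left_iff one_lt_two).mpr h2
    _ = 2 / x := by
        rw [Real.rpow_sub two_pos, Real.rpow_one, Real.rpow_logb two_pos (by norm_num) hx0]

private lemma aux_y_le_one {x : ℝ} (hx : 1 ≤ x) : (2:ℝ) ^ (-⌊Real.logb 2 x⌋) ≤ 1 := by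
  have h : (0:ℤ) ≤ ⌊Real.logb 2 x⌋ := Int.floor_nonneg.mpr (Real.logb_nonneg one_lt_two hx)
  rw [zpow_neg]
  exact inv_le_one_of_one_le₀ (one_le_zpow₀ (by norm_num) h)

/-- For `U_{1,n} ≤ … ≤ U_{n,n}` the order statistics of `n` i.i.d. `Uniform(0,1)`
random variables, `Ψ(x) = 2^{{log₂ x}}` and `0 ≤ r < n`:
`P{Ψ(U_{r+1,n})/U_{r+1,n} > x} = P{U_{r+1,n} < 2^{-⌊log₂ x⌋}}
  ~ C(n,r+1)·2^{(r+1){log₂ x}}/x^{r+1}` as `x → ∞`. -/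
theorem stmt_16 {Ω : Type*} [MeasurableSpace Ω] (μ : Measure Ω) [IsProbabilityMeasure μ]
    (n : ℕ) (U : Fin n → Ω → ℝ) (hm : ∀ i, Measurable (U i))
    (hindep : iIndepFun U μ)
    (hd : ∀ i, μ.map (U i) = volume.restrict (Set.Ioo (0 : ℝ) 1))
    (r : ℕ) (hr : r < n) :
    (∀ x : ℝ, 0 < x →
      μ {ω | x < (2 : ℝ) ^ Int.fract (Real.logb 2 (orderStat U r ω)) / orderStat U r ω} =
        μ {ω | orderStat U r ω < (2 : ℝ) ^ (-⌊Real.logb 2 x⌋)}) ∧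
    Tendsto (fun x : ℝ =>
        (μ {ω | x < (2 : ℝ) ^ Int.fract (Real.logb 2 (orderStat U r ω)) /
            orderStat U r ω}).toReal /
          ((n.choose (r + 1) : ℝ) *
            (2 : ℝ) ^ (((r : ℝ) + 1) * Int.fract (Real.logb 2 x)) / x ^ (r + 1)))
      atTop (𝓝 1) := by
  have hG : ∀ᵐ ω ∂μ, ∀ i, U i ω ∈ Set.Ioo (0:ℝ) 1 := aux_good μ n U hm hd
  have part1 : ∀ x : ℝ, 0 < x →
      μ {ω | x < (2 : ℝ) ^ Int.fract (Real.logb 2 (orderStat U r ω)) / orderStat U r ω} =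
        μ {ω | orderStat U r ω < (2 : ℝ) ^ (-⌊Real.logb 2 x⌋)} := by
    intro x hx
    refine measure_congr (Filter.eventuallyEq_set.mpr ?_)
    filter_upwards [hG] with ω hω
    have hpos := (aux_order hr hω).1
    show x < _ / _ ↔ _
    rw [aux_psi hpos]
    exact aux_swap hpos hx
  refine ⟨part1, ?_⟩
  set C : ℝ := (n.choose (r+1) : ℝ) with hC
  have hCpos : 0 < C := by
    rw [hC]; exact_mod_cast Nat.choose_pos (by omega : r + 1 ≤ n)
  set y : ℝ → ℝ := fun x => (2:ℝ) ^ (-⌊Real.logb 2 x⌋) with hy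
  have hy0 : ∀ x : ℝ, 0 < y x := fun x => zpow_pos two_pos _
  have key : ∀ x : ℝ, 0 < x →
      μ {ω | x < (2 : ℝ) ^ Int.fract (Real.logb 2 (orderStat U r ω)) / orderStat U r ω}
        = μ {ω | r + 1 ≤ {i : Fin n | U i ω < y x}.ncard} := by
    intro x hx
    rw [part1 x hx]
    refine measure_congr (Filter.eventuallyEq_set.mpr ?_)
    filter_upwards [hG] with ω hω
    exact (aux_order hr hω).2 (y x)
  -- limits
  have hylim : Tendsto y atTop (𝓝 0) := by
    refine squeeze_zero' (g := fun x : ℝ => 2 / x) ?_ ?_ ?_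
    · filter_upwards [eventually_ge_atTop (1:ℝ)] with x _
      exact (hy0 x).le
    · filter_upwards [eventually_ge_atTop (1:ℝ)] with x hx
      exact aux_y_le hx
    · exact Tendsto.div_atTop tendsto_const_nhds tendsto_id
  have hglim : Tendsto (fun x => (1 - y x)^(n-(r+1))) atTop (𝓝 1) := by
    have h1 : Tendsto (fun x => 1 - y x) atTop (𝓝 1) := by
      simpa using tendsto_const_nhds.sub hylim
    simpa using h1.pow (n-(r+1))
  refine tendsto_of_tendsto_of_tendsto_of_le_of_le' hglim tendsto_const_nhds ?_ ?_
  · -- lower bound eventually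
    filter_upwards [eventually_ge_atTop (1:ℝ)] with x hx
    have hx0 : (0:ℝ) < x := by linarith
    have hb := aux_bounds μ hm hindep hd (r := r) (hy0 x) (aux_y_le_one hx)
    have hlow : C * (y x)^(r+1) * (1 - y x)^(n-(r+1))
        ≤ (μ {ω | r + 1 ≤ {i : Fin n | U i ω < y x}.ncard}).toReal :=
      (ENNReal.ofReal_le_iff_le_toReal (measure_ne_top μ _)).mp hb.1
    rw [key x hx0, aux_denom hx0 r C]
    have hDpos : 0 < C * (y x)^(r+1) := by positivity
    rw [le_div_iff₀ hDpos]
    calc (1 - y x)^(n-(r+1)) * (C * (y x)^(r+1))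
        = C * (y x)^(r+1) * (1 - y x)^(n-(r+1)) := by ring
      _ ≤ _ := hlow
  · -- upper bound eventually
    filter_upwards [eventually_ge_atTop (1:ℝ)] with x hx
    have hx0 : (0:ℝ) < x := by linarith
    have hb := aux_bounds μ hm hindep hd (r := r) (hy0 x) (aux_y_le_one hx)
    have hupp : (μ {ω | r + 1 ≤ {i : Fin n | U i ω < y x}.ncard}).toReal
        ≤ C * (y x)^(r+1) :=
      ENNReal.toReal_le_of_le_ofReal (by positivity) hb.2
    rw [key x hx0, aux_denom hx0 r C]
    have hDpos : 0 < C * (y x)^(r+1) := by positivity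
    rw [div_le_one hDpos]
    exact hupp
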